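/- For every integer d ≥ 2 there exists a constant C_d > 0 such that the following holds for all real q ≥ 3. Let N be a finite set, let x > 0 be a real number with |N| ≤ q^d − x, and let (m_p)_{p∈N} be nonnegative real numbers with ∑_{p∈N} m_p = (q−1)·x. If ∑_{p∈N} m_p^{d/(d−1)} ≤ x^{d/(d−1)} + (q−2)·x, then x ≤ C_d·q^{d − 1/d}. -/

import Mathlib

set_option maxHeartbeats 1000000


/-- The concavity/power-mean deduction at the end of the main proof: for every `d ≥ 2` there
is `C_d > 0` such that for all real `q ≥ 3`, every finite index set `N`, every real `x > 0`
with `|N| ≤ q^d - x`, and all nonnegative reals `(m_p)_{p ∈ N}` with `∑ m_p = (q-1) x`: if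
`∑_{p ∈ N} m_p^{d/(d-1)} ≤ x^{d/(d-1)} + (q-2) x`, then `x ≤ C_d q^{d - 1/d}`. -/
theorem final_inequality (d : ℕ) (hd : 2 ≤ d) :
    ∃ C : ℝ, 0 < C ∧
      ∀ (q : ℝ), 3 ≤ q →
        ∀ (N : Type) [Fintype N] (m : N → ℝ) (x : ℝ),
          0 < x → (Fintype.card N : ℝ) ≤ q ^ d - x →
          (∀ p, 0 ≤ m p) → (∑ p, m p) = (q - 1) * x →
          (∑ p, m p ^ ((d : ℝ) / ((d : ℝ) - 1))) ≤
            x ^ ((d : ℝ) / ((d : ℝ) - 1)) + (q - 2) * x →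
          x ≤ C * q ^ ((d : ℝ) - 1 / (d : ℝ)) := by
  have hd0 : (0:ℕ) < d := by omega
  refine ⟨4 * d, by positivity, ?_⟩
  intro q hq N _ m x hx hcard hm hsum hpow
  set e : ℝ := (d : ℝ) / ((d : ℝ) - 1) with he
  have hd2 : (2:ℝ) ≤ (d:ℝ) := by exact_mod_cast hd
  have hd1' : (0:ℝ) < (d:ℝ) - 1 := by linarith
  have he1 : 1 < e := by rw [he, lt_div_iff₀ hd1']; linarith
  have he2 : e ≤ 2 := by rw [he, div_le_iff₀ hd1']; linarith
  have hes : e - 1 = 1 / ((d:ℝ) - 1) := by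
    rw [he]; field_simp; ring
  have hde : (d:ℝ) * (e - 1) = e := by
    rw [hes, he]; field_simp
  have hq0 : (0:ℝ) < q := by linarith
  have hq1 : (1:ℝ) ≤ q := by linarith
  -- rewrite the nat power as an rpow
  set Q : ℝ := q ^ ((d:ℝ)) with hQdef
  have hQnat : (q : ℝ) ^ d = Q := by
    rw [hQdef, Real.rpow_natCast]
  rw [hQnat] at hcard
  have hQ0 : (0:ℝ) < Q := Real.rpow_pos_of_pos hq0 _
  have hxQ : x ≤ Q := by
    have h0 : (0:ℝ) ≤ (Fintype.card N : ℝ) := by positivity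
    linarith
  set S : ℝ := ∑ p, m p ^ e with hS
  have hS0 : 0 ≤ S := Finset.sum_nonneg fun p _ => Real.rpow_nonneg (hm p) _
  -- Step A: power mean inequality
  have hA : ((q - 1) * x) ^ e ≤ (Fintype.card N : ℝ) ^ (e - 1) * S := by
    rw [← hsum, hS]
    have := Real.rpow_sum_le_const_mul_sum_rpow_of_nonneg (s := (Finset.univ : Finset N))
      (f := m) he1.le (fun i _ => hm i)
    simpa [Finset.card_univ] using this
  -- Step B: card ^ (e-1) ≤ Q^(e-1) * (1 - (e-1) x / Q)
  have hcard0 : (0:ℝ) ≤ (Fintype.card N : ℝ) := by positivity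
  have hB1 : (Fintype.card N : ℝ) ^ (e - 1) ≤ (Q - x) ^ (e - 1) :=
    Real.rpow_le_rpow hcard0 hcard (by linarith)
  have hQx : Q - x = Q * (1 + (-(x / Q))) := by field_simp; ring
  have hBern : (1 + (-(x / Q))) ^ (e - 1) ≤ 1 + (e - 1) * (-(x / Q)) :=
    rpow_one_add_le_one_add_mul_self (by rw [neg_le, neg_neg, div_le_one hQ0]; exact hxQ)
      (by linarith) (by linarith)
  have hQe : (0:ℝ) ≤ Q ^ (e - 1) := Real.rpow_nonneg hQ0.le _
  have hB2 : (Q - x) ^ (e - 1) ≤ Q ^ (e - 1) * (1 - (e - 1) * (x / Q)) := by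
    have hfac0 : (0:ℝ) ≤ 1 + (-(x / Q)) := by
      have := (div_le_one hQ0).mpr hxQ; linarith
    rw [hQx, Real.mul_rpow hQ0.le hfac0]
    calc Q ^ (e-1) * (1 + (-(x / Q))) ^ (e - 1)
        ≤ Q ^ (e-1) * (1 + (e - 1) * (-(x / Q))) :=
          mul_le_mul_of_nonneg_left hBern hQe
      _ = Q ^ (e - 1) * (1 - (e - 1) * (x / Q)) := by ring
  -- Q^(e-1) = q^e
  have hQeq : Q ^ (e - 1) = q ^ e := by
    rw [hQdef, ← Real.rpow_mul hq0.le, hde]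
  -- positivity facts
  have hqe0 : (0:ℝ) < q ^ e := Real.rpow_pos_of_pos hq0 _
  have hxQ1 : x / Q ≤ 1 := (div_le_one hQ0).mpr hxQ
  have hxQ0 : (0:ℝ) ≤ x / Q := by positivity
  have hfac : (0:ℝ) ≤ 1 - (e - 1) * (x / Q) := by
    have h3 : (e - 1) * (x / Q) ≤ 1 * 1 :=
      mul_le_mul (by linarith) hxQ1 hxQ0 (by norm_num)
    linarith
  -- main chain
  have hxe0 : (0:ℝ) < x ^ e := Real.rpow_pos_of_pos hx _
  have hchain : ((q - 1) * x) ^ e ≤ q ^ e * (1 - (e - 1) * (x / Q)) * (x ^ e + (q - 2) * x) := by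
    calc ((q - 1) * x) ^ e ≤ (Fintype.card N : ℝ) ^ (e - 1) * S := hA
      _ ≤ (Q - x) ^ (e - 1) * S := mul_le_mul_of_nonneg_right hB1 hS0
      _ ≤ Q ^ (e - 1) * (1 - (e - 1) * (x / Q)) * S :=
          mul_le_mul_of_nonneg_right hB2 hS0
      _ = q ^ e * (1 - (e - 1) * (x / Q)) * S := by rw [hQeq]
      _ ≤ q ^ e * (1 - (e - 1) * (x / Q)) * (x ^ e + (q - 2) * x) :=
          mul_le_mul_of_nonneg_left hpow (mul_nonneg hqe0.le hfac)
  -- Step C: Bernoulli lower bound for (q-1)^e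
  have hC : q ^ e * (1 - e * (1 / q)) ≤ (q - 1) ^ e := by
    have hb : 1 + e * (-(1 / q)) ≤ (1 + (-(1 / q))) ^ e :=
      one_add_mul_self_le_rpow_one_add (by rw [neg_le, neg_neg, div_le_one hq0]; linarith)
        he1.le
    have hq1q : q - 1 = q * (1 + (-(1 / q))) := by field_simp; ring
    have h1q : (0:ℝ) ≤ 1 + (-(1 / q)) := by
      have : 1 / q ≤ 1 := by rw [div_le_one hq0]; linarith
      linarith
    rw [hq1q, Real.mul_rpow hq0.le h1q]
    calc q ^ e * (1 - e * (1 / q)) = q ^ e * (1 + e * (-(1/q))) := by ring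
      _ ≤ q ^ e * (1 + (-(1 / q))) ^ e := mul_le_mul_of_nonneg_left hb hqe0.le
  have hmulpow : ((q - 1) * x) ^ e = (q - 1) ^ e * x ^ e :=
    Real.mul_rpow (by linarith) hx.le
  -- divide by q^e
  have hK : (1 - e * (1 / q)) * x ^ e ≤ (1 - (e - 1) * (x / Q)) * (x ^ e + (q - 2) * x) := by
    have h1 : q ^ e * ((1 - e * (1 / q)) * x ^ e) ≤
        q ^ e * ((1 - (e - 1) * (x / Q)) * (x ^ e + (q - 2) * x)) := by
      have h2 := mul_le_mul_of_nonneg_right hC hxe0.le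
      calc q ^ e * ((1 - e * (1 / q)) * x ^ e) = q ^ e * (1 - e * (1 / q)) * x ^ e := by ring
        _ ≤ (q - 1) ^ e * x ^ e := h2
        _ = ((q - 1) * x) ^ e := hmulpow.symm
        _ ≤ q ^ e * (1 - (e - 1) * (x / Q)) * (x ^ e + (q - 2) * x) := hchain
        _ = q ^ e * ((1 - (e - 1) * (x / Q)) * (x ^ e + (q - 2) * x)) := by ring
    exact le_of_mul_le_mul_left h1 hqe0
  -- key inequality
  have hK' : (e - 1) * (x / Q) * x ^ e ≤ e * (1 / q) * x ^ e + (q - 2) * x := by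
    have hpos : (0:ℝ) ≤ (e - 1) * (x / Q) * ((q - 2) * x) :=
      mul_nonneg (mul_nonneg (by linarith) hxQ0) (mul_nonneg (by linarith) hx.le)
    linarith only [hK, hpos]
  -- conclude
  by_contra hcon
  push_neg at hcon
  set y : ℝ := q ^ ((d:ℝ) - 1 / (d:ℝ)) with hy
  have hy0 : (0:ℝ) < y := Real.rpow_pos_of_pos hq0 _
  have hdpos : (0:ℝ) < (d:ℝ) := by linarith
  -- q^(d-1) ≤ y and Q = q * q^(d-1)
  have hyq : q ^ ((d:ℝ) - 1) ≤ y := by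
    apply Real.rpow_le_rpow_of_exponent_le hq1
    have : 1 / (d:ℝ) ≤ 1 := by rw [div_le_one hdpos]; linarith
    linarith
  have hQq : Q = q * q ^ ((d:ℝ) - 1) := by
    have h' : q * q ^ ((d:ℝ) - 1) = q ^ (1 + ((d:ℝ) - 1)) := by
      rw [Real.rpow_add hq0, Real.rpow_one]
    rw [hQdef, h']; norm_num
  have hqd1 : (0:ℝ) < q ^ ((d:ℝ) - 1) := Real.rpow_pos_of_pos hq0 _
  -- part (i)
  have h2dQ : 2 * (d:ℝ) * Q < x * q := by
    have h1 : Q ≤ q * y := by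
      rw [hQq]; exact mul_le_mul_of_nonneg_left hyq hq0.le
    have h2 : 2 * (d:ℝ) * Q ≤ 2 * (d:ℝ) * (q * y) :=
      mul_le_mul_of_nonneg_left h1 (by positivity)
    have h3 : 4 * (d:ℝ) * y * q < x * q := mul_lt_mul_of_pos_right hcon hq0
    have h4 : (0:ℝ) < (d:ℝ) * (q * y) := by positivity
    linarith only [h2, h3, h4]
  have hi : e * (1 / q) * x ^ e < (e - 1) / 2 * (x / Q) * x ^ e := by
    have h1 : e * (1 / q) < (e - 1) / 2 * (x / Q) := by
      have hlt : (e - 1) * (2 * (d:ℝ) * Q) < (e - 1) * (x * q) :=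
        mul_lt_mul_of_pos_left h2dQ (by linarith)
      have lhs_eq : e * (1 / q) * (2 * Q * q) = (e - 1) * (2 * (d:ℝ) * Q) := by
        have hne : ((d:ℝ) - 1) ≠ 0 := hd1'.ne'
        have hqne : q ≠ 0 := hq0.ne'
        rw [he]
        field_simp
        ring
      have rhs_eq : (e - 1) / 2 * (x / Q) * (2 * Q * q) = (e - 1) * (x * q) := by
        field_simp
      have h2Qq : (0:ℝ) < 2 * Q * q := by positivity
      exact lt_of_mul_lt_mul_right (by rw [lhs_eq, rhs_eq]; exact hlt) h2Qq.le
    exact mul_lt_mul_of_pos_right h1 hxe0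
  -- part (ii)
  have hqQ0 : (0:ℝ) < q * Q := by positivity
  have hXge : 2 * ((d:ℝ) - 1) * (q * Q) ≤ x ^ e := by
    have hx4 : 4 * (d:ℝ) * y ≤ x := hcon.le
    have h1 : (4 * (d:ℝ) * y) ^ e ≤ x ^ e :=
      Real.rpow_le_rpow (by positivity) hx4 (by linarith)
    have h3 : y ^ e = q * Q := by
      rw [hy, ← Real.rpow_mul hq0.le]
      have hexp : ((d:ℝ) - 1 / (d:ℝ)) * e = (d:ℝ) + 1 := by
        rw [he]; field_simp; ring
      have h' : q * q ^ ((d:ℝ)) = q ^ (1 + (d:ℝ)) := by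
        rw [Real.rpow_add hq0, Real.rpow_one]
      rw [hexp, hQdef, h']; ring_nf
    have h2 : (4 * (d:ℝ) * y) ^ e = (4 * (d:ℝ)) ^ e * (q * Q) := by
      rw [Real.mul_rpow (by positivity) hy0.le, h3]
    have h4 : (4 * (d:ℝ)) ≤ (4 * (d:ℝ)) ^ e := by
      nth_rewrite 1 [← Real.rpow_one (4 * (d:ℝ))]
      exact Real.rpow_le_rpow_of_exponent_le (by linarith) he1.le
    have h5 : (4 * (d:ℝ)) * (q * Q) ≤ (4 * (d:ℝ)) ^ e * (q * Q) :=
      mul_le_mul_of_nonneg_right h4 hqQ0.le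
    have h6 : 2 * ((d:ℝ) - 1) * (q * Q) ≤ (4 * (d:ℝ)) * (q * Q) :=
      mul_le_mul_of_nonneg_right (by linarith) hqQ0.le
    linarith only [h1, h2, h5, h6]
  have hii : (q - 2) * x ≤ (e - 1) / 2 * (x / Q) * x ^ e := by
    have hc0 : (0:ℝ) ≤ (e - 1) / 2 * (x / Q) :=
      mul_nonneg (by linarith) hxQ0
    have h1 : (e - 1) / 2 * (x / Q) * (2 * ((d:ℝ) - 1) * (q * Q)) ≤
        (e - 1) / 2 * (x / Q) * x ^ e :=
      mul_le_mul_of_nonneg_left hXge hc0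
    have h2 : (e - 1) / 2 * (x / Q) * (2 * ((d:ℝ) - 1) * (q * Q)) = q * x := by
      have hne : ((d:ℝ) - 1) ≠ 0 := hd1'.ne'
      rw [hes]
      field_simp
    have h3 : (q - 2) * x ≤ q * x :=
      mul_le_mul_of_nonneg_right (by linarith) hx.le
    linarith only [h1, h2, h3]
  linarith only [hK', hi, hii]
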